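/- arXiv:2503.11157 — 3 statements merged into one kernel-verified Lean document; each statement's English description precedes it below -/
import Mathlib

section
/- Let f be a concave function on ℝ that is differentiable in a neighborhood of a closed interval [x₀, x₁]. Then the concave Legendre transform f*(y) := inf_x (x·y − f(x)) is strictly concave on the open interval (f'(x₁), f'(x₀)). -/
open Set

/-- The (concave) Legendre transform of `f`, as a real-valued function (the infimum is
finite and attained at points where the considered slope is a derivative value of `f`). -/
noncomputable def concaveLegendre (f : ℝ → ℝ) (y : ℝ) : ℝ :=
  sInf (Set.range fun x => x * y - f x)

/-- If a point globally minimizes `z ↦ z * c - f z` and `f` is differentiable there, then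
`deriv f x = c`. -/
lemma deriv_eq_of_min (f : ℝ → ℝ) (x c : ℝ) (hd : DifferentiableAt ℝ f x)
    (hmin : ∀ z : ℝ, x * c - f x ≤ z * c - f z) : deriv f x = c := by
  have hg : HasDerivAt (fun z : ℝ => z * c - f z) (1 * c - deriv f x) x :=
    ((hasDerivAt_id x).mul_const c).sub hd.hasDerivAt
  have hloc : IsLocalMin (fun z : ℝ => z * c - f z) x := by
    filter_upwards [Filter.univ_mem] with z _ using hmin z
  have := hloc.deriv_eq_zero
  rw [hg.deriv] at this
  linarith

/-- Existence of a global minimizer of `z ↦ z * y - f z` in `[x₀, x₁]` when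
`y ∈ (f'(x₁), f'(x₀))`. -/
lemma exists_min_legendre (f : ℝ → ℝ) (x₀ x₁ : ℝ) (hx : x₀ ≤ x₁)
    (hconc : ConcaveOn ℝ Set.univ f)
    (U : Set ℝ) (hU : IsOpen U) (hIcc : Set.Icc x₀ x₁ ⊆ U)
    (hdiff : ∀ x ∈ U, DifferentiableAt ℝ f x)
    (y : ℝ) (hy : y ∈ Set.Ioo (deriv f x₁) (deriv f x₀)) :
    ∃ x ∈ Set.Icc x₀ x₁, ∀ z : ℝ, x * y - f x ≤ z * y - f z := by
  set g : ℝ → ℝ := fun z => z * y - f z with hg_def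
  have hlin : ConvexOn ℝ Set.univ (fun z : ℝ => z * y) := by
    refine ⟨convex_univ, fun a _ b _ p q _ _ _ => le_of_eq ?_⟩
    simp [smul_eq_mul]; ring
  have hgconv : ConvexOn ℝ Set.univ g := by
    have := hlin.add hconc.neg
    have hfun : g = (fun z => z * y) + -f := by
      ext z
      simp [hg_def, sub_eq_add_neg]
    rw [hfun]
    exact this
  have hx₀U : x₀ ∈ U := hIcc ⟨le_refl _, hx⟩
  have hx₁U : x₁ ∈ U := hIcc ⟨hx, le_refl _⟩
  have hgd : ∀ x ∈ U, HasDerivAt g (y - deriv f x) x := by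
    intro x hxU
    have : HasDerivAt g (1 * y - deriv f x) x :=
      ((hasDerivAt_id x).mul_const y).sub (hdiff x hxU).hasDerivAt
    simpa using this
  have hgcont : ContinuousOn g (Set.Icc x₀ x₁) := fun x hxI =>
    ((hgd x (hIcc hxI)).continuousAt).continuousWithinAt
  obtain ⟨x, hxI, hmin⟩ := isCompact_Icc.exists_isMinOn (Set.nonempty_Icc.2 hx) hgcont
  refine ⟨x, hxI, fun z => ?_⟩
  rcases lt_or_ge z x₀ with hz | hz
  · -- z < x₀ : slope g z x₀ ≤ g'(x₀) = y - f'(x₀) < 0, so g x₀ ≤ g z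
    have hslope := hgconv.slope_le_of_hasDerivAt (mem_univ z) (mem_univ x₀) hz
      (hgd x₀ hx₀U)
    have hneg : y - deriv f x₀ < 0 := by linarith [hy.2]
    rw [slope_def_field] at hslope
    have : (g x₀ - g z) / (x₀ - z) < 0 := lt_of_le_of_lt hslope hneg
    have hpos : (0:ℝ) < x₀ - z := by linarith
    have : g x₀ - g z < 0 := by
      by_contra h
      exact absurd (div_nonneg (by linarith) hpos.le) (not_le.2 this)
    calc g x ≤ g x₀ := hmin ⟨le_refl _, hx⟩
      _ ≤ g z := by linarith
  rcases le_or_gt z x₁ with hz' | hz'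
  · exact hmin ⟨hz, hz'⟩
  · -- x₁ < z : g'(x₁) ≤ slope g x₁ z, g'(x₁) = y - f'(x₁) > 0, so g x₁ ≤ g z
    have hslope := hgconv.le_slope_of_hasDerivAt (mem_univ x₁) (mem_univ z) hz'
      (hgd x₁ hx₁U)
    have hposd : 0 < y - deriv f x₁ := by linarith [hy.1]
    rw [slope_def_field] at hslope
    have h1 : 0 < (g z - g x₁) / (z - x₁) := lt_of_lt_of_le hposd hslope
    have hpos : (0:ℝ) < z - x₁ := by linarith
    have : 0 < g z - g x₁ := by
      by_contra h
      have := div_nonpos_of_nonpos_of_nonneg (by linarith : g z - g x₁ ≤ 0) hpos.le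
      linarith
    calc g x ≤ g x₁ := hmin ⟨hx, le_refl _⟩
      _ ≤ g z := by linarith

/-- If `f` is concave on `ℝ` and differentiable in a neighborhood of `[x₀, x₁]`, then its
concave Legendre transform `f*(y) = inf_x (x·y − f(x))` is strictly concave on the open
interval `(f'(x₁), f'(x₀))`. -/
theorem strictConcaveOn_concaveLegendre_of_differentiable
    (f : ℝ → ℝ) (x₀ x₁ : ℝ) (hx : x₀ ≤ x₁)
    (hconc : ConcaveOn ℝ Set.univ f)
    (U : Set ℝ) (hU : IsOpen U) (hIcc : Set.Icc x₀ x₁ ⊆ U)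
    (hdiff : ∀ x ∈ U, DifferentiableAt ℝ f x) :
    StrictConcaveOn ℝ (Set.Ioo (deriv f x₁) (deriv f x₀)) (concaveLegendre f) := by
  have key := exists_min_legendre f x₀ x₁ hx hconc U hU hIcc hdiff
  -- value of the transform at a point with a minimizer
  have hval : ∀ (c : ℝ) (x : ℝ), (∀ z : ℝ, x * c - f x ≤ z * c - f z) →
      concaveLegendre f c = x * c - f x := by
    intro c x hmin
    apply le_antisymm
    · exact csInf_le ⟨x * c - f x, by rintro _ ⟨z, rfl⟩; exact hmin z⟩ ⟨x, rfl⟩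
    · exact le_csInf ⟨x * c - f x, ⟨x, rfl⟩⟩ (by rintro _ ⟨z, rfl⟩; exact hmin z)
  have hle : ∀ (c : ℝ) (hc : BddBelow (Set.range fun z => z * c - f z)) (x : ℝ),
      concaveLegendre f c ≤ x * c - f x := fun c hc x => csInf_le hc ⟨x, rfl⟩
  refine ⟨convex_Ioo _ _, fun a ha b hb hab p q hp hq hpq => ?_⟩
  set y : ℝ := p * a + q * b with hy_def
  have hyI : y ∈ Set.Ioo (deriv f x₁) (deriv f x₀) :=
    (convex_Ioo (deriv f x₁) (deriv f x₀)) ha hb hp.le hq.le hpq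
  obtain ⟨x, hxI, hminy⟩ := key y hyI
  obtain ⟨xa, _, hmina⟩ := key a ha
  obtain ⟨xb, _, hminb⟩ := key b hb
  have hbdda : BddBelow (Set.range fun z => z * a - f z) :=
    ⟨xa * a - f xa, by rintro _ ⟨z, rfl⟩; exact hmina z⟩
  have hbddb : BddBelow (Set.range fun z => z * b - f z) :=
    ⟨xb * b - f xb, by rintro _ ⟨z, rfl⟩; exact hminb z⟩
  have hfy : concaveLegendre f y = x * y - f x := hval y x hminy
  have hxU : x ∈ U := hIcc hxI
  have hderivx : deriv f x = y := deriv_eq_of_min f x y (hdiff x hxU) hminy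
  -- strict inequalities at a and b
  have hstricta : concaveLegendre f a < x * a - f x := by
    rcases lt_or_eq_of_le (hle a hbdda x) with h | h
    · exact h
    · exfalso
      have hminxa : ∀ z : ℝ, x * a - f x ≤ z * a - f z := by
        intro z
        rw [← h]
        exact csInf_le hbdda ⟨z, rfl⟩
      have : deriv f x = a := deriv_eq_of_min f x a (hdiff x hxU) hminxa
      rw [hderivx] at this
      have : q * (b - a) = 0 := by rw [hy_def] at this; linear_combination this - a * hpq
      rcases mul_eq_zero.1 this with h' | h'
      · exact hq.ne' h'
      · exact hab (by linarith)
  have hstrictb : concaveLegendre f b < x * b - f x := by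
    rcases lt_or_eq_of_le (hle b hbddb x) with h | h
    · exact h
    · exfalso
      have hminxb : ∀ z : ℝ, x * b - f x ≤ z * b - f z := by
        intro z
        rw [← h]
        exact csInf_le hbddb ⟨z, rfl⟩
      have : deriv f x = b := deriv_eq_of_min f x b (hdiff x hxU) hminxb
      rw [hderivx] at this
      have : p * (a - b) = 0 := by rw [hy_def] at this; linear_combination this - b * hpq
      rcases mul_eq_zero.1 this with h' | h'
      · exact hp.ne' h'
      · exact hab (by linarith)
  calc p • concaveLegendre f a + q • concaveLegendre f b
      < p * (x * a - f x) + q * (x * b - f x) := by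
        simp only [smul_eq_mul]
        exact add_lt_add (by nlinarith) (by nlinarith)
    _ = x * y - f x := by rw [hy_def]; linear_combination (-(f x)) * hpq
    _ = concaveLegendre f (p • a + q • b) := by
        rw [← hfy]; congr 1
end

section
/- Let f : ℝ → [−∞, ∞] with sup f < ∞, and let U be a nonempty bounded open subset of ℝ on which f is finite and upper semicontinuous. Then the set {x ∈ U : f**(x) > f(x)} is open in U, and the concave envelope f** is affine on each connected component of this set. -/
open Set

noncomputable def concaveEnvelope (f : ℝ → EReal) : ℝ → EReal :=
  fun x => ⨅ p : {p : ℝ × ℝ // ∀ z : ℝ, f z ≤ ((p.1 * z + p.2 : ℝ) : EReal)},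
    ((p.1.1 * x + p.1.2 : ℝ) : EReal)

namespace CEAux

def aff (p : ℝ × ℝ) (x : ℝ) : ℝ := p.1 * x + p.2

def IsMaj (f : ℝ → EReal) (p : ℝ × ℝ) : Prop := ∀ z : ℝ, f z ≤ ((aff p z : ℝ) : EReal)

variable {f : ℝ → EReal} {M : ℝ} {U : Set ℝ}

lemma env_le_aff {p : ℝ × ℝ} (hp : IsMaj f p) (x : ℝ) :
    concaveEnvelope f x ≤ ((aff p x : ℝ) : EReal) :=
  iInf_le (fun q : {p : ℝ × ℝ // ∀ z : ℝ, f z ≤ ((p.1 * z + p.2 : ℝ) : EReal)} =>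
    ((q.1.1 * x + q.1.2 : ℝ) : EReal)) ⟨p, hp⟩

lemma le_env {x : ℝ} {c : EReal} (h : ∀ p, IsMaj f p → c ≤ ((aff p x : ℝ) : EReal)) :
    c ≤ concaveEnvelope f x :=
  le_iInf fun q => h q.1 q.2

lemma f_le_env (f : ℝ → EReal) (x : ℝ) : f x ≤ concaveEnvelope f x :=
  le_iInf fun q => q.2 x

lemma isMaj_const (hsup : ∀ x, f x ≤ (M : EReal)) : IsMaj f (0, M) := by
  intro z
  simpa [aff] using hsup z

lemma env_le_M (hsup : ∀ x, f x ≤ (M : EReal)) (x : ℝ) :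
    concaveEnvelope f x ≤ (M : EReal) := by
  simpa [aff] using env_le_aff (isMaj_const hsup) x

lemma env_ne_top (hsup : ∀ x, f x ≤ (M : EReal)) (x : ℝ) : concaveEnvelope f x ≠ ⊤ :=
  ((env_le_M hsup x).trans_lt (EReal.coe_lt_top M)).ne

noncomputable def eE (f : ℝ → EReal) (x : ℝ) : ℝ := (concaveEnvelope f x).toReal

lemma coe_eE (hsup : ∀ x, f x ≤ (M : EReal)) (hfin : ∀ x ∈ U, f x ≠ ⊤ ∧ f x ≠ ⊥)
    {x : ℝ} (hx : x ∈ U) : ((eE f x : ℝ) : EReal) = concaveEnvelope f x := by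
  refine EReal.coe_toReal (env_ne_top hsup x) ?_
  intro hbot
  exact (hfin x hx).2 (le_bot_iff.mp (hbot ▸ f_le_env f x))

lemma env_concave {u v t cu cv : ℝ} (ht0 : 0 ≤ t) (ht1 : t ≤ 1)
    (hcu : (cu : EReal) ≤ concaveEnvelope f u) (hcv : (cv : EReal) ≤ concaveEnvelope f v) :
    ((t * cu + (1 - t) * cv : ℝ) : EReal) ≤ concaveEnvelope f (t * u + (1 - t) * v) := by
  apply le_env
  intro p hp
  have h1 : cu ≤ aff p u :=
    EReal.coe_le_coe_iff.mp (hcu.trans (env_le_aff hp u))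
  have h2 : cv ≤ aff p v :=
    EReal.coe_le_coe_iff.mp (hcv.trans (env_le_aff hp v))
  rw [EReal.coe_le_coe_iff]
  have e1 : t * cu ≤ t * aff p u := mul_le_mul_of_nonneg_left h1 ht0
  have e2 : (1 - t) * cv ≤ (1 - t) * aff p v :=
    mul_le_mul_of_nonneg_left h2 (by linarith)
  have : t * aff p u + (1 - t) * aff p v = aff p (t * u + (1 - t) * v) := by
    simp only [aff]; ring
  linarith


lemma env_extrapolate (hsup : ∀ x, f x ≤ (M : EReal)) (hfin : ∀ x ∈ U, f x ≠ ⊤ ∧ f x ≠ ⊥)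
    {u w z : ℝ} (hu : u ∈ U) (hw : w ∈ U) (h1 : u < w) (h2 : w < z) :
    concaveEnvelope f z ≤
      ((eE f u + ((eE f w - eE f u) / (w - u)) * (z - u) : ℝ) : EReal) := by
  by_contra hc
  push_neg at hc
  obtain ⟨c, hc1, hc2⟩ := EReal.exists_between_coe_real hc
  have hcg : eE f u + ((eE f w - eE f u) / (w - u)) * (z - u) < c := by
    exact_mod_cast hc1
  set t : ℝ := (z - w) / (z - u) with ht
  have hzu : (0:ℝ) < z - u := by linarith
  have ht0 : 0 ≤ t := div_nonneg (by linarith) hzu.le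
  have ht1 : t ≤ 1 := (div_le_one hzu).mpr (by linarith)
  have htz : t * (z - u) = z - w := by
    rw [ht, div_mul_cancel₀ _ hzu.ne']
  have hcomb : t * u + (1 - t) * z = w := by linear_combination -htz
  have hkey := env_concave (f := f) ht0 ht1 (le_of_eq (coe_eE hsup hfin hu))
    hc2.le
  rw [hcomb] at hkey
  rw [← coe_eE hsup hfin hw, EReal.coe_le_coe_iff] at hkey
  -- hkey : t * eE f u + (1 - t) * c ≤ eE f w
  have h1t : (0:ℝ) < 1 - t := by
    rw [ht]
    have : (z - w) / (z - u) < 1 := (div_lt_one hzu).mpr (by linarith)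
    linarith
  have hwu : (1 - t) * (z - u) = w - u := by linear_combination -htz
  have hsk : ((eE f w - eE f u) / (w - u)) * (w - u) = eE f w - eE f u :=
    div_mul_cancel₀ _ (by linarith : w - u ≠ 0)
  have hx : (1 - t) * ((eE f w - eE f u) / (w - u) * (z - u)) = eE f w - eE f u := by
    rw [show (1 - t) * ((eE f w - eE f u) / (w - u) * (z - u))
        = (eE f w - eE f u) / (w - u) * ((1 - t) * (z - u)) from by ring, hwu, hsk]
  have hexp : (1 - t) * (eE f u + (eE f w - eE f u) / (w - u) * (z - u))
      = (1 - t) * eE f u + (eE f w - eE f u) := by rw [mul_add, hx]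
  have hsum : t * eE f u + (1 - t) * eE f u = eE f u := by ring
  linarith [mul_lt_mul_of_pos_left hcg h1t]

lemma exists_gap (hUopen : IsOpen U) (husc : UpperSemicontinuousOn f U)
    {p : ℝ × ℝ} (hp : IsMaj f p) {K : Set ℝ} (hKcp : IsCompact K) (hKne : K.Nonempty)
    (hKU : K ⊆ U) (hKS : ∀ z ∈ K, f z < concaveEnvelope f z) :
    ∃ γ : ℝ, 0 < γ ∧ ∀ z ∈ K, f z ≤ ((aff p z - γ : ℝ) : EReal) := by
  have hpt : ∀ z : ℝ, ∃ γ : ℝ, 0 < γ ∧ ∃ V : Set ℝ, V ∈ nhds z ∧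
      (z ∈ K → ∀ y ∈ V, f y ≤ ((aff p y - γ : ℝ) : EReal)) := by
    intro z
    by_cases hz : z ∈ K
    · have hzU := hKU hz
      have h1 : f z < ((aff p z : ℝ) : EReal) := (hKS z hz).trans_le (env_le_aff hp z)
      obtain ⟨c, hc1, hc2⟩ := EReal.exists_between_coe_real h1
      have hcr : c < aff p z := by exact_mod_cast hc2
      refine ⟨(aff p z - c) / 2, by linarith, ?_⟩
      have husc' : ∀ᶠ y in nhds z, f y < (c : EReal) := by
        have h := husc z hzU (c : EReal) hc1
        rwa [nhdsWithin_eq_nhds.mpr (hUopen.mem_nhds hzU)] at h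
      have hcont : Continuous fun y => aff p y := by
        simp only [aff]; fun_prop
      have hopen : IsOpen {y : ℝ | c < aff p y - (aff p z - c) / 2} :=
        isOpen_lt continuous_const (by fun_prop)
      have h2 : ∀ᶠ y in nhds z, c < aff p y - (aff p z - c) / 2 :=
        Filter.eventually_of_mem (hopen.mem_nhds (by simp; linarith)) fun y hy => hy
      refine ⟨{y : ℝ | f y < (c : EReal) ∧ c < aff p y - (aff p z - c) / 2},
        (husc'.and h2), ?_⟩
      intro _ y hy
      refine hy.1.le.trans ?_
      exact_mod_cast hy.2.le
    · exact ⟨1, one_pos, univ, Filter.univ_mem, fun h => absurd h hz⟩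
  choose γf hγf Vf hVf hprop using hpt
  obtain ⟨T, hTK, hcov⟩ := hKcp.elim_nhds_subcover Vf (fun z _ => hVf z)
  have hTne : T.Nonempty := by
    obtain ⟨z, hz⟩ := hKne
    obtain ⟨i, hi, _⟩ := mem_iUnion₂.mp (hcov hz)
    exact ⟨i, hi⟩
  refine ⟨T.inf' hTne γf, ?_, ?_⟩
  · exact (Finset.lt_inf'_iff hTne).mpr fun i _ => hγf i
  · intro z hz
    obtain ⟨i, hi, hzV⟩ := mem_iUnion₂.mp (hcov hz)
    refine (hprop i (hTK i hi) z hzV).trans ?_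
    exact_mod_cast sub_le_sub_left (Finset.inf'_le γf hi) (aff p z)


lemma exists_support (hsup : ∀ x, f x ≤ (M : EReal)) (hUopen : IsOpen U)
    (hfin : ∀ x ∈ U, f x ≠ ⊤ ∧ f x ≠ ⊥) {x₀ : ℝ} (hx₀ : x₀ ∈ U) :
    ∃ p : ℝ × ℝ, IsMaj f p ∧ aff p x₀ = eE f x₀ := by
  obtain ⟨ε, hε, hball⟩ := Metric.isOpen_iff.mp hUopen x₀ hx₀
  set δ : ℝ := ε / 2 with hδdef
  have hδ : (0:ℝ) < δ := by positivity
  have huU : x₀ - δ ∈ U := hball (by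
    rw [Metric.mem_ball, Real.dist_eq]
    rw [abs_lt]; constructor <;> [skip; skip] <;> simp [hδdef] <;> linarith)
  have hvU : x₀ + δ ∈ U := hball (by
    rw [Metric.mem_ball, Real.dist_eq]
    rw [abs_lt]; constructor <;> [skip; skip] <;> simp [hδdef] <;> linarith)
  set e₀ : ℝ := eE f x₀
  set eu : ℝ := eE f (x₀ - δ)
  set ev : ℝ := eE f (x₀ + δ)
  have hlow : ∀ (p : ℝ × ℝ), IsMaj f p → ∀ y ∈ U, eE f y ≤ aff p y := by
    intro p hp y hy
    rw [← EReal.coe_le_coe_iff, coe_eE hsup hfin hy]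
    exact env_le_aff hp y
  have hseq : ∀ n : ℕ, ∃ p : ℝ × ℝ, IsMaj f p ∧ aff p x₀ < e₀ + 1 / ((n:ℝ) + 1) := by
    intro n
    have hpos : (0:ℝ) < 1 / ((n:ℝ) + 1) := by positivity
    have h : concaveEnvelope f x₀ < ((e₀ + 1 / ((n:ℝ) + 1) : ℝ) : EReal) := by
      rw [← coe_eE hsup hfin hx₀, EReal.coe_lt_coe_iff]
      linarith
    obtain ⟨⟨p, hp⟩, h2⟩ := iInf_lt_iff.mp h
    exact ⟨p, hp, by exact_mod_cast h2⟩
  choose ps hmaj hlt using hseq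
  set lo : ℝ := (ev - e₀ - 1) / δ
  set hi : ℝ := (e₀ + 1 - eu) / δ
  have hn1 : ∀ n : ℕ, (1 : ℝ) / ((n:ℝ) + 1) ≤ 1 := by
    intro n
    rw [div_le_one (by positivity)]
    simp
  have hmlo : ∀ n, lo ≤ (ps n).1 := by
    intro n
    have h1 := hlow (ps n) (hmaj n) _ hvU
    have h2 := (hlt n).le.trans (by linarith [hn1 n] : e₀ + 1 / ((n:ℝ) + 1) ≤ e₀ + 1)
    simp only [aff] at h1 h2
    rw [div_le_iff₀ hδ]
    nlinarith
  have hmhi : ∀ n, (ps n).1 ≤ hi := by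
    intro n
    have h1 := hlow (ps n) (hmaj n) _ huU
    have h2 := (hlt n).le.trans (by linarith [hn1 n] : e₀ + 1 / ((n:ℝ) + 1) ≤ e₀ + 1)
    simp only [aff] at h1 h2
    rw [le_div_iff₀ hδ]
    nlinarith
  have haffx₀ : ∀ n, e₀ ≤ aff (ps n) x₀ := fun n => hlow (ps n) (hmaj n) _ hx₀
  set R : ℝ := |e₀| + 1 + (|lo| + |hi|) * |x₀|
  have habsm : ∀ n, |(ps n).1| ≤ |lo| + |hi| := by
    intro n
    rw [abs_le]
    constructor
    · linarith [hmlo n, neg_abs_le lo, abs_nonneg hi]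
    · linarith [hmhi n, le_abs_self hi, abs_nonneg lo]
  have hcbd : ∀ n, (ps n).2 ∈ Icc (-R) R := by
    intro n
    have h2 := (hlt n).le.trans (by linarith [hn1 n] : e₀ + 1 / ((n:ℝ) + 1) ≤ e₀ + 1)
    have h1 := haffx₀ n
    simp only [aff] at h1 h2
    have hmx : |(ps n).1 * x₀| ≤ (|lo| + |hi|) * |x₀| := by
      rw [abs_mul]
      exact mul_le_mul_of_nonneg_right (habsm n) (abs_nonneg x₀)
    constructor
    · have := neg_abs_le ((ps n).1 * x₀)
      have := le_abs_self ((ps n).1 * x₀)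
      have := neg_abs_le e₀
      simp only [R]
      linarith
    · have := neg_abs_le ((ps n).1 * x₀)
      have := le_abs_self ((ps n).1 * x₀)
      have := le_abs_self e₀
      simp only [R]
      linarith
  have hcompact : IsCompact (Icc lo hi ×ˢ Icc (-R) R) := isCompact_Icc.prod isCompact_Icc
  have hmem : ∀ n, ps n ∈ Icc lo hi ×ˢ Icc (-R) R := by
    intro n
    exact ⟨⟨hmlo n, hmhi n⟩, hcbd n⟩
  obtain ⟨p, _, φ, hφ, htend⟩ := hcompact.tendsto_subseq hmem
  have htendaff : ∀ z : ℝ, Filter.Tendsto (fun n => aff (ps (φ n)) z) Filter.atTop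
      (nhds (aff p z)) := by
    intro z
    have hcont : Continuous fun q : ℝ × ℝ => aff q z := by
      simp only [aff]; fun_prop
    exact (hcont.tendsto p).comp htend
  refine ⟨p, ?_, ?_⟩
  · intro z
    have h1 : Filter.Tendsto (fun n => ((aff (ps (φ n)) z : ℝ) : EReal)) Filter.atTop
        (nhds ((aff p z : ℝ) : EReal)) :=
      (continuous_coe_real_ereal.tendsto _).comp (htendaff z)
    exact ge_of_tendsto h1 (Filter.Eventually.of_forall fun n => hmaj (φ n) z)
  · have hge : e₀ ≤ aff p x₀ := ge_of_tendsto' (htendaff x₀) fun n => haffx₀ (φ n)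
    have hle : aff p x₀ ≤ e₀ := by
      have htend2 : Filter.Tendsto (fun n : ℕ => e₀ + 1 / ((φ n : ℝ) + 1)) Filter.atTop
          (nhds (e₀ + 0)) := by
        refine Filter.Tendsto.const_add _ ?_
        have h0 : Filter.Tendsto (fun n : ℕ => 1 / ((n : ℝ) + 1)) Filter.atTop (nhds 0) :=
          tendsto_one_div_add_atTop_nhds_zero_nat
        exact h0.comp hφ.tendsto_atTop
      rw [add_zero] at htend2
      exact le_of_tendsto_of_tendsto' (htendaff x₀) htend2 fun n => (hlt (φ n)).le
    linarith


lemma main_right (hsup : ∀ x, f x ≤ (M : EReal)) (hUopen : IsOpen U)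
    (hfin : ∀ x ∈ U, f x ≠ ⊤ ∧ f x ≠ ⊥) (husc : UpperSemicontinuousOn f U)
    {x₀ : ℝ} (hx₀ : x₀ ∈ {x ∈ U | f x < concaveEnvelope f x}) :
    ∃ p : ℝ × ℝ, IsMaj f p ∧
      ∀ w ∈ connectedComponentIn {x ∈ U | f x < concaveEnvelope f x} x₀,
        x₀ ≤ w → concaveEnvelope f w = ((aff p w : ℝ) : EReal) := by
  set S := {x ∈ U | f x < concaveEnvelope f x} with hSdef
  obtain ⟨hx₀U, hx₀lt⟩ := hx₀
  obtain ⟨p₀, hp₀, hp₀x⟩ := exists_support hsup hUopen hfin hx₀U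
  set C := connectedComponentIn S x₀ with hCdef
  have hCS : C ⊆ S := connectedComponentIn_subset S x₀
  have hCU : C ⊆ U := fun z hz => (hCS hz).1
  have hOC : C.OrdConnected := isPreconnected_connectedComponentIn.ordConnected
  obtain ⟨ε, hε, hball⟩ := Metric.isOpen_iff.mp hUopen x₀ hx₀U
  have hvU : x₀ + ε / 2 ∈ U := hball (by
    rw [Metric.mem_ball, Real.dist_eq, abs_lt]
    constructor <;> linarith)
  set A := {a : ℝ | 0 ≤ a ∧ IsMaj f (p₀.1 - a, p₀.2 + a * x₀)} with hAdef
  have haff : ∀ (a z : ℝ), aff (p₀.1 - a, p₀.2 + a * x₀) z = aff p₀ z - a * (z - x₀) := by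
    intro a z; simp only [aff]; ring
  have h0A : (0 : ℝ) ∈ A := by
    refine ⟨le_refl _, ?_⟩
    intro z
    rw [haff]
    simpa using hp₀ z
  have hbddA : BddAbove A := by
    refine ⟨(aff p₀ (x₀ + ε / 2) - eE f (x₀ + ε / 2)) / (ε / 2), ?_⟩
    rintro a ⟨ha0, hmaj'⟩
    have h1 : ((eE f (x₀ + ε / 2) : ℝ) : EReal) ≤
        ((aff (p₀.1 - a, p₀.2 + a * x₀) (x₀ + ε / 2) : ℝ) : EReal) := by
      rw [coe_eE hsup hfin hvU]
      exact env_le_aff hmaj' _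
    rw [EReal.coe_le_coe_iff, haff] at h1
    rw [le_div_iff₀ (by linarith)]
    nlinarith
  set E : ℝ := sSup A with hEdef
  have hE0 : 0 ≤ E := le_csSup hbddA h0A
  have hmajE : IsMaj f (p₀.1 - E, p₀.2 + E * x₀) := by
    intro z
    rw [haff]
    rcases lt_trichotomy z x₀ with h | h | h
    · refine (hp₀ z).trans ?_
      have : aff p₀ z ≤ aff p₀ z - E * (z - x₀) := by nlinarith
      exact_mod_cast this
    · subst h
      simpa using hp₀ z
    · by_cases hbz : f z = ⊥
      · simp [hbz]
      have hzt : f z ≠ ⊤ := ((hsup z).trans_lt (EReal.coe_lt_top M)).ne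
      have hfz : (((f z).toReal : ℝ) : EReal) = f z := EReal.coe_toReal hzt hbz
      have hub : ∀ a ∈ A, a ≤ (aff p₀ z - (f z).toReal) / (z - x₀) := by
        rintro a ⟨ha0, hmaj'⟩
        have h1 := hmaj' z
        rw [← hfz, haff, EReal.coe_le_coe_iff] at h1
        rw [le_div_iff₀ (by linarith)]
        linarith
      have hsE : E ≤ (aff p₀ z - (f z).toReal) / (z - x₀) := csSup_le ⟨0, h0A⟩ hub
      rw [le_div_iff₀ (by linarith)] at hsE
      rw [← hfz]
      exact_mod_cast by linarith
  set pR : ℝ × ℝ := (p₀.1 - E, p₀.2 + E * x₀) with hpRdef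
  have hpRx : aff pR x₀ = eE f x₀ := by
    rw [hpRdef, haff]
    simpa using hp₀x
  refine ⟨pR, hmajE, ?_⟩
  intro w hwC hxw
  have hle : concaveEnvelope f w ≤ ((aff pR w : ℝ) : EReal) := env_le_aff hmajE w
  rcases eq_or_lt_of_le hxw with rfl | hxw'
  · rw [hpRx, coe_eE hsup hfin hx₀U]
  by_contra hne
  have hltE : concaveEnvelope f w < ((aff pR w : ℝ) : EReal) := lt_of_le_of_ne hle hne
  have hwU : w ∈ U := hCU hwC
  have hltr : eE f w < aff pR w := by
    rw [← EReal.coe_lt_coe_iff, coe_eE hsup hfin hwU]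
    exact hltE
  set s : ℝ := (eE f w - eE f x₀) / (w - x₀) with hsdef
  have haffR : ∀ z : ℝ, aff pR z = eE f x₀ + pR.1 * (z - x₀) := by
    intro z
    have hx : pR.1 * x₀ + pR.2 = eE f x₀ := hpRx
    simp only [aff]
    linear_combination hx
  have hs : s < pR.1 := by
    rw [hsdef, div_lt_iff₀ (by linarith)]
    have := haffR w
    linarith
  have hIccC : Icc x₀ w ⊆ C :=
    hOC.out (mem_connectedComponentIn ⟨hx₀U, hx₀lt⟩) hwC
  obtain ⟨γ, hγ, hgap⟩ := exists_gap hUopen husc hmajE isCompact_Icc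
    ⟨x₀, left_mem_Icc.mpr hxw⟩ (fun z hz => hCU (hIccC hz))
    (fun z hz => (hCS (hIccC hz)).2)
  set η : ℝ := min (γ / (w - x₀)) (pR.1 - s) with hηdef
  have hη : 0 < η := lt_min (div_pos hγ (by linarith)) (by linarith)
  have hA' : E + η ∈ A := by
    refine ⟨by linarith, ?_⟩
    intro z
    have hqz : aff (p₀.1 - (E + η), p₀.2 + (E + η) * x₀) z = aff pR z - η * (z - x₀) := by
      simp only [hpRdef, aff]; ring
    rw [hqz]
    rcases le_or_gt z x₀ with h | h
    · refine (hmajE z).trans ?_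
      have : aff pR z ≤ aff pR z - η * (z - x₀) := by nlinarith
      exact_mod_cast this
    rcases le_or_gt z w with h2 | h2
    · refine (hgap z ⟨h.le, h2⟩).trans ?_
      have h3 : η * (z - x₀) ≤ γ := by
        calc η * (z - x₀) ≤ γ / (w - x₀) * (z - x₀) :=
              mul_le_mul_of_nonneg_right (min_le_left _ _) (by linarith)
          _ ≤ γ / (w - x₀) * (w - x₀) :=
              mul_le_mul_of_nonneg_left (by linarith)
                (le_of_lt (div_pos hγ (by linarith)))
          _ = γ := div_mul_cancel₀ _ (by linarith)
      have : aff pR z - γ ≤ aff pR z - η * (z - x₀) := by linarith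
      exact_mod_cast this
    · have hch := env_extrapolate (f := f) hsup hfin hx₀U hwU hxw' h2
      refine (f_le_env f z).trans (hch.trans ?_)
      rw [EReal.coe_le_coe_iff]
      have hRz := haffR z
      have h4 : η ≤ pR.1 - s := min_le_right _ _
      have h5 : s * (z - x₀) ≤ (pR.1 - η) * (z - x₀) :=
        mul_le_mul_of_nonneg_right (by linarith) (by linarith)
      rw [← hsdef]
      linarith
  have hcontra : E + η ≤ E := le_csSup hbddA hA'
  linarith


lemma isOpen_S (hsup : ∀ x, f x ≤ (M : EReal)) (hUopen : IsOpen U)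
    (hfin : ∀ x ∈ U, f x ≠ ⊤ ∧ f x ≠ ⊥) (husc : UpperSemicontinuousOn f U) :
    IsOpen {x ∈ U | f x < concaveEnvelope f x} := by
  rw [isOpen_iff_mem_nhds]
  rintro x ⟨hxU, hxlt⟩
  obtain ⟨c, hc1, hc2⟩ := EReal.exists_between_coe_real hxlt
  obtain ⟨ε, hε, hball⟩ := Metric.isOpen_iff.mp hUopen x hxU
  set δ : ℝ := ε / 2 with hδdef
  have hδ : (0:ℝ) < δ := by positivity
  have hpU : x + δ ∈ U := hball (by
    rw [Metric.mem_ball, Real.dist_eq, abs_lt]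
    constructor <;> simp only [hδdef] <;> linarith)
  have hmU : x - δ ∈ U := hball (by
    rw [Metric.mem_ball, Real.dist_eq, abs_lt]
    constructor <;> simp only [hδdef] <;> linarith)
  have hcx : c < eE f x := by
    rw [← EReal.coe_lt_coe_iff, coe_eE hsup hfin hxU]
    exact hc2
  set φ : ℝ → ℝ := fun y => ((x + δ - y) / δ) * eE f x + ((y - x) / δ) * eE f (x + δ)
    with hφdef
  set ψ : ℝ → ℝ := fun y => ((y - (x - δ)) / δ) * eE f x + ((x - y) / δ) * eE f (x - δ)
    with hψdef
  have hφc : Continuous φ := by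
    simp only [hφdef]
    fun_prop
  have hψc : Continuous ψ := by
    simp only [hψdef]
    fun_prop
  have hφx : φ x = eE f x := by
    simp only [hφdef]
    field_simp
    ring
  have hψx : ψ x = eE f x := by
    simp only [hψdef]
    field_simp
    ring
  have hevφ : ∀ᶠ y in nhds x, c < φ y := by
    have hopen : IsOpen {y : ℝ | c < φ y} := isOpen_lt continuous_const hφc
    exact Filter.eventually_of_mem (hopen.mem_nhds (by simpa [hφx] using hcx)) fun y hy => hy
  have hevψ : ∀ᶠ y in nhds x, c < ψ y := by
    have hopen : IsOpen {y : ℝ | c < ψ y} := isOpen_lt continuous_const hψc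
    exact Filter.eventually_of_mem (hopen.mem_nhds (by simpa [hψx] using hcx)) fun y hy => hy
  have husc' : ∀ᶠ y in nhds x, f y < (c : EReal) := by
    have h := husc x hxU (c : EReal) hc1
    rwa [nhdsWithin_eq_nhds.mpr (hUopen.mem_nhds hxU)] at h
  have hUev : ∀ᶠ y in nhds x, y ∈ U :=
    Filter.eventually_of_mem (hUopen.mem_nhds hxU) fun y hy => hy
  have hIev : ∀ᶠ y in nhds x, y ∈ Ioo (x - δ) (x + δ) :=
    Filter.eventually_of_mem (isOpen_Ioo.mem_nhds (by constructor <;> linarith))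
      fun y hy => hy
  filter_upwards [hevφ, hevψ, husc', hUev, hIev] with y h1 h2 h3 h4 h5
  refine ⟨h4, ?_⟩
  rcases le_or_gt x y with hxy | hxy
  · set t : ℝ := (x + δ - y) / δ with htdef
    have ht0 : 0 ≤ t := div_nonneg (by linarith [h5.2]) hδ.le
    have ht1 : t ≤ 1 := (div_le_one hδ).mpr (by linarith)
    have hcomb : t * x + (1 - t) * (x + δ) = y := by
      have : t * δ = x + δ - y := by
        rw [htdef, div_mul_cancel₀ _ hδ.ne']
      linear_combination -this
    have hkey := env_concave (f := f) ht0 ht1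
      (le_of_eq (coe_eE hsup hfin hxU)) (le_of_eq (coe_eE hsup hfin hpU))
    rw [hcomb] at hkey
    have hφy : t * eE f x + (1 - t) * eE f (x + δ) = φ y := by
      have h1t : 1 - t = (y - x) / δ := by
        rw [htdef]
        field_simp
        ring
      rw [h1t, htdef, hφdef]
    calc f y < (c : EReal) := h3
      _ < ((φ y : ℝ) : EReal) := by exact_mod_cast h1
      _ ≤ concaveEnvelope f y := by rw [← hφy]; exact hkey
  · set t : ℝ := (x - y) / δ with htdef
    have ht0 : 0 ≤ t := div_nonneg (by linarith) hδ.le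
    have ht1 : t ≤ 1 := (div_le_one hδ).mpr (by linarith [h5.1])
    have hcomb : t * (x - δ) + (1 - t) * x = y := by
      have : t * δ = x - y := by
        rw [htdef, div_mul_cancel₀ _ hδ.ne']
      linear_combination -this
    have hkey := env_concave (f := f) ht0 ht1
      (le_of_eq (coe_eE hsup hfin hmU)) (le_of_eq (coe_eE hsup hfin hxU))
    rw [hcomb] at hkey
    have hψy : t * eE f (x - δ) + (1 - t) * eE f x = ψ y := by
      have h1t : 1 - t = (y - (x - δ)) / δ := by
        rw [htdef]
        field_simp
        ring
      rw [h1t, htdef, hψdef]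
      ring
    calc f y < (c : EReal) := h3
      _ < ((ψ y : ℝ) : EReal) := by exact_mod_cast h2
      _ ≤ concaveEnvelope f y := by rw [← hψy]; exact hkey
  

end CEAux

/-- Let `f : ℝ → [−∞,∞]` be bounded above, and `U` a nonempty bounded open set on which
`f` is finite and upper semicontinuous.  Then `{x ∈ U : f**(x) > f(x)}` is open, and the
concave envelope `f**` is affine on each connected component of this set. -/
theorem concaveEnvelope_affine_on_gt_set
    (f : ℝ → EReal) (M : ℝ) (hsup : ∀ x, f x ≤ (M : EReal))
    (U : Set ℝ) (hUne : U.Nonempty) (hUopen : IsOpen U) (hUbdd : Bornology.IsBounded U)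
    (hfin : ∀ x ∈ U, f x ≠ ⊤ ∧ f x ≠ ⊥)
    (husc : UpperSemicontinuousOn f U) :
    IsOpen {x ∈ U | f x < concaveEnvelope f x} ∧
      ∀ x ∈ {x ∈ U | f x < concaveEnvelope f x},
        ∃ m c : ℝ, ∀ z ∈ connectedComponentIn {x ∈ U | f x < concaveEnvelope f x} x,
          concaveEnvelope f z = ((m * z + c : ℝ) : EReal) := by
  have hopen : IsOpen {x ∈ U | f x < concaveEnvelope f x} :=
    CEAux.isOpen_S hsup hUopen hfin husc
  refine ⟨hopen, ?_⟩
  intro x hx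
  set S := {x ∈ U | f x < concaveEnvelope f x} with hS
  have hxC : x ∈ connectedComponentIn S x := mem_connectedComponentIn hx
  have hCopen : IsOpen (connectedComponentIn S x) := hopen.connectedComponentIn
  obtain ⟨δ, hδ, hball⟩ := Metric.isOpen_iff.mp hCopen x hxC
  set u : ℝ := x - δ / 2 with hudef
  have huC : u ∈ connectedComponentIn S x := hball (by
    rw [Metric.mem_ball, Real.dist_eq, hudef, abs_lt]
    constructor <;> linarith)
  have hxu : u < x := by rw [hudef]; linarith
  have huS : u ∈ S := connectedComponentIn_subset S x huC
  have hCeq : connectedComponentIn S x = connectedComponentIn S u :=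
    connectedComponentIn_eq huC
  obtain ⟨p, hpmaj, hp⟩ := CEAux.main_right hsup hUopen hfin husc huS
  refine ⟨p.1, p.2, ?_⟩
  intro z hzC
  show concaveEnvelope f z = ((CEAux.aff p z : ℝ) : EReal)
  have hzC' : z ∈ connectedComponentIn S u := hCeq ▸ hzC
  rcases le_or_gt u z with h | h
  · exact hp z hzC' h
  · have hzS : z ∈ S := connectedComponentIn_subset S x hzC
    have hCz : connectedComponentIn S x = connectedComponentIn S z :=
      connectedComponentIn_eq hzC
    obtain ⟨q, hqmaj, hq⟩ := CEAux.main_right hsup hUopen hfin husc hzS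
    have huCz : u ∈ connectedComponentIn S z := hCz ▸ huC
    have hxCz : x ∈ connectedComponentIn S z := hCz ▸ hxC
    have hqu := hq u huCz h.le
    have hqx := hq x hxCz (by linarith : z ≤ x)
    have hpu := hp u (hCeq ▸ huC) le_rfl
    have hpx := hp x (hCeq ▸ hxC) (by linarith : u ≤ x)
    have e1 : CEAux.aff q u = CEAux.aff p u := by
      have h' := hqu.symm.trans hpu
      exact_mod_cast h'
    have e2 : CEAux.aff q x = CEAux.aff p x := by
      have h' := hqx.symm.trans hpx
      exact_mod_cast h'
    simp only [CEAux.aff] at e1 e2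
    have hmul : (q.1 - p.1) * (u - x) = 0 := by linear_combination e1 - e2
    have hq1 : q.1 = p.1 := by
      rcases mul_eq_zero.mp hmul with h' | h'
      · linarith
      · exfalso; linarith
    have hq2 : q.2 = p.2 := by
      rw [hq1] at e1
      linarith
    have hz' := hq z (mem_connectedComponentIn hzS) le_rfl
    rw [hz']
    simp only [CEAux.aff, hq1, hq2]
end

section
/- Let f : ℝ → ℝ be convex and finite on an interval I, and suppose f is differentiable at every point of I with derivative given by a continuous function. If, for a family (μ_β) indexed by β ∈ I, f(β) = inf over a set of the functional β·E(μ) − S(μ) attained uniquely at μ_β with E(μ_β) continuous in β, then f'(β) = E(μ_β) for all β ∈ I. -/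
open Set Filter Topology

/-- Envelope theorem for the free energy: let `F(β) = inf_μ (β·E(μ) − S(μ))` be convex and
finite on an open interval `I = (a,b)`, with the infimum attained at a unique `μ β` for
each `β ∈ I`, and suppose that `β ↦ E (μ β)` is continuous on `I`.  Then `F` is
differentiable on `I` with `F'(β) = E (μ β)`. -/
theorem hasDerivAt_freeEnergy_eq_energy_of_minimizer
    {M : Type*} (E S : M → ℝ) (a b : ℝ) (hab : a < b)
    (μ : ℝ → M)
    (F : ℝ → ℝ) (hF : ∀ β, F β = sInf (Set.range fun ν => β * E ν - S ν))
    (hconv : ConvexOn ℝ (Set.Ioo a b) F)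
    (hmin : ∀ β ∈ Set.Ioo a b, ∀ ν : M, β * E (μ β) - S (μ β) ≤ β * E ν - S ν)
    (huniq : ∀ β ∈ Set.Ioo a b, ∀ ν : M,
      β * E ν - S ν = β * E (μ β) - S (μ β) → ν = μ β)
    (hcont : ContinuousOn (fun β => E (μ β)) (Set.Ioo a b)) :
    ∀ β ∈ Set.Ioo a b, HasDerivAt F (E (μ β)) β := by
  -- F β = β * E (μ β) - S (μ β) for β ∈ Ioo a b
  have hFeq : ∀ β ∈ Set.Ioo a b, F β = β * E (μ β) - S (μ β) := by
    intro β hβ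
    rw [hF β]
    apply le_antisymm
    · refine csInf_le ⟨β * E (μ β) - S (μ β), ?_⟩ ⟨μ β, rfl⟩
      rintro x ⟨ν, rfl⟩; exact hmin β hβ ν
    · refine le_csInf ⟨_, ⟨μ β, rfl⟩⟩ ?_
      rintro x ⟨ν, rfl⟩; exact hmin β hβ ν
  have hFle : ∀ β' ∈ Set.Ioo a b, ∀ ν : M, F β' ≤ β' * E ν - S ν := by
    intro β' hβ' ν
    rw [hFeq β' hβ']; exact hmin β' hβ' ν
  intro β hβ
  rw [hasDerivAt_iff_tendsto_slope]
  set L := E (μ β) with hL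
  -- key slope estimate
  have key : ∀ β' ∈ Set.Ioo a b, β' ≠ β →
      |slope F β β' - L| ≤ |E (μ β') - L| := by
    intro β' hβ' hne
    have h1 : F β' - F β ≤ (β' - β) * L := by
      have := hFle β' hβ' (μ β)
      rw [hFeq β hβ]; nlinarith [this]
    have h2 : (β' - β) * E (μ β') ≤ F β' - F β := by
      have := hFle β hβ (μ β')
      rw [hFeq β' hβ']; nlinarith [this]
    have hs : slope F β β' = (F β' - F β) / (β' - β) := by
      simp [slope_def_field, div_sub_div_same]
    rw [hs]
    have hd : β' - β ≠ 0 := sub_ne_zero.mpr hne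
    rw [div_sub' hd, abs_div]
    rw [div_le_iff₀ (abs_pos.mpr hd)]
    rcases lt_or_gt_of_ne hne with h | h
    · -- β' < β, so β' - β < 0
      rw [abs_of_neg (by linarith : β' - β < 0)]
      rcases abs_cases (E (μ β') - L) with ⟨he, _⟩ | ⟨he, _⟩ <;>
        rcases abs_cases (F β' - F β - (β' - β) * L) with ⟨hf, _⟩ | ⟨hf, _⟩ <;>
        nlinarith
    · rw [abs_of_pos (by linarith : 0 < β' - β)]
      rcases abs_cases (E (μ β') - L) with ⟨he, _⟩ | ⟨he, _⟩ <;>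
        rcases abs_cases (F β' - F β - (β' - β) * L) with ⟨hf, _⟩ | ⟨hf, _⟩ <;>
        nlinarith
  -- eventually in Ioo a b
  have hIoo : Set.Ioo a b ∈ 𝓝[≠] β :=
    nhdsWithin_le_nhds (isOpen_Ioo.mem_nhds hβ)
  have hE : Tendsto (fun β' => E (μ β')) (𝓝[≠] β) (𝓝 L) := by
    have := (hcont β hβ).tendsto
    exact this.mono_left (nhdsWithin_le_of_mem hIoo)
  have hzero : Tendsto (fun β' => slope F β β' - L) (𝓝[≠] β) (𝓝 0) := by
    have hg : Tendsto (fun β' => |E (μ β') - L|) (𝓝[≠] β) (𝓝 0) := by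
      have h0 : Tendsto (fun β' => E (μ β') - L) (𝓝[≠] β) (𝓝 0) := by
        simpa using hE.sub_const L
      simpa using h0.norm
    refine squeeze_zero_norm' ?_ hg
    filter_upwards [hIoo, self_mem_nhdsWithin] with β' h1 h2
    exact key β' h1 h2
  have := hzero.add_const L
  simpa using this
end
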